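/- Let G be a finite simple graph and s a vertex of G, and let l be the length of a longest induced path in G starting at s. Then every optimal strategy for the firefighting process on (G, s) defends at most l vertices. -/

import Mathlib

open SimpleGraph

variable {V : Type*}

/-- The set of vertices burned by the end of time step `i` (0-indexed: `burnt G s S i` is `B_i`),
when a fire starts at `s` and the firefighter defends the vertices of the list `S` in order. -/
def burnt (G : SimpleGraph V) (s : V) (S : List V) : ℕ → Set V
  | 0 => {s}
  | i + 1 => burnt G s S i ∪
      {u | u ∉ S.take (i + 1) ∧ ∃ b ∈ burnt G s S i, G.Adj u b}

/-- The set of all vertices ever burned by the strategy `S`. -/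
def BurntSet (G : SimpleGraph V) (s : V) (S : List V) : Set V := ⋃ i, burnt G s S i

/-- A strategy is a sequence of pairwise distinct vertices; it is valid if the vertex defended
at each step is not yet burning at the start of that step. -/
def ValidStrategy (G : SimpleGraph V) (s : V) (S : List V) : Prop :=
  S.Nodup ∧ ∀ (i : ℕ) (h : i < S.length), S.get ⟨i, h⟩ ∉ burnt G s S i

/-- The number of vertices saved (i.e. not burned) by the strategy `S`. -/
noncomputable def sav (G : SimpleGraph V) (s : V) (S : List V) : ℕ := (BurntSet G s S)ᶜ.ncard

/-- A valid strategy is minimal if every proper subsequence of it which is itself a valid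
strategy saves strictly fewer vertices. -/
def MinimalStrategy (G : SimpleGraph V) (s : V) (S : List V) : Prop :=
  ValidStrategy G s S ∧ ∀ S' : List V, S'.Sublist S → S' ≠ S → ValidStrategy G s S' →
    sav G s S' < sav G s S

/-- A strategy is optimal if it is minimal and saves the maximum number of vertices. -/
def OptimalStrategy (G : SimpleGraph V) (s : V) (S : List V) : Prop :=
  MinimalStrategy G s S ∧ ∀ S' : List V, ValidStrategy G s S' → sav G s S' ≤ sav G s S

/-- A walk is an induced path if it is a path and the subgraph induced on its vertices has no
edges besides the edges of the path. -/
def IsInducedPath (G : SimpleGraph V) {a b : V} (p : G.Walk a b) : Prop :=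
  p.IsPath ∧ ∀ x ∈ p.support, ∀ y ∈ p.support, G.Adj x y → p.toSubgraph.Adj x y

/-- `u` is reachable from `s` in the subgraph of `G` induced on the complement of `A`. -/
def ReachAvoiding (G : SimpleGraph V) (A : Set V) (s u : V) : Prop :=
  ∃ p : G.Walk s u, ∀ x ∈ p.support, x ∉ A


section Aux

lemma burnt_succ (G : SimpleGraph V) (s : V) (S : List V) (i : ℕ) :
    burnt G s S (i+1) = burnt G s S i ∪
      {u | u ∉ S.take (i + 1) ∧ ∃ b ∈ burnt G s S i, G.Adj u b} := rfl

lemma burnt_mono (G : SimpleGraph V) (s : V) (S : List V) {i j : ℕ} (h : i ≤ j) :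
    burnt G s S i ⊆ burnt G s S j := by
  induction j with
  | zero => simp_all
  | succ j ih =>
    rcases Nat.lt_or_ge i (j+1) with h' | h'
    · exact (ih (Nat.lt_succ_iff.mp h')).trans Set.subset_union_left
    · have : i = j + 1 := le_antisymm h h'
      subst this; rfl

lemma burnt_antitone (G : SimpleGraph V) (s : V) {S S' : List V}
    (h : ∀ n, ∀ x, x ∈ S'.take n → x ∈ S.take n) :
    ∀ i, burnt G s S i ⊆ burnt G s S' i := by
  intro i
  induction i with
  | zero => exact le_refl _
  | succ i ih =>
    rintro u (hu | ⟨h1, b, hb, hadj⟩)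
    · exact Or.inl (ih hu)
    · exact Or.inr ⟨fun hc => h1 (h _ _ hc), b, ih hb, hadj⟩

lemma burnt_eq_of_take_eq (G : SimpleGraph V) (s : V) {S S' : List V} {i : ℕ}
    (h : ∀ n ≤ i, S'.take n = S.take n) : burnt G s S' i = burnt G s S i := by
  induction i with
  | zero => rfl
  | succ i ih =>
    have hi := ih (fun n hn => h n (hn.trans (Nat.le_succ i)))
    rw [burnt_succ, burnt_succ, hi, h (i+1) le_rfl]

lemma defended_not_burnt {G : SimpleGraph V} {s : V} {S : List V}
    (hS : ValidStrategy G s S) {x : V} (hx : x ∈ S) : ∀ m, x ∉ burnt G s S m := by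
  obtain ⟨i, hi⟩ := List.get_of_mem hx
  have hkey : x ∉ burnt G s S i.1 := hi ▸ hS.2 i.1 i.2
  have hup : ∀ m, i.1 ≤ m → x ∉ burnt G s S m := by
    intro m hm
    induction m, hm using Nat.le_induction with
    | base => exact hkey
    | succ m hm ihm =>
      rintro (hc | ⟨h1, _⟩)
      · exact ihm hc
      · refine h1 ?_
        have : x = (S.take (m+1)).get ⟨i.1, by
          simp [List.length_take]; omega⟩ := by
          simp [List.get_eq_getElem, List.getElem_take, ← hi]
        exact this ▸ List.get_mem _ _
  intro m hm
  rcases le_or_gt i.1 m with h | h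
  · exact hup m h hm
  · exact hkey (burnt_mono G s S h.le hm)

lemma burnt_of_walk {G : SimpleGraph V} {s : V} {S : List V} {a u : V} {m : ℕ}
    (ha : a ∈ burnt G s S m) (p : G.Walk a u)
    (hp : ∀ x ∈ p.support, x ∉ S) : u ∈ burnt G s S (m + p.length) := by
  induction p generalizing m with
  | nil => exact ha
  | @cons a c u h q ih =>
    have hc : c ∈ burnt G s S (m+1) :=
      Or.inr ⟨fun hmem => hp c (by simp) (List.take_subset _ _ hmem), a, ha, h.symm⟩
    have := ih hc (fun x hx => hp x (by simp [hx]))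
    simpa [Nat.add_comm, Nat.add_assoc, Nat.add_left_comm] using this

lemma exists_walk_of_burnt {G : SimpleGraph V} {s : V} {S : List V} {u : V} {m : ℕ}
    (hu : u ∈ burnt G s S m) :
    ∃ p : G.Walk s u, ∀ x ∈ p.support, x ∈ burnt G s S m := by
  induction m generalizing u with
  | zero =>
    obtain rfl : u = s := hu
    refine ⟨Walk.nil, ?_⟩
    intro x hx
    simp at hx
    subst hx; rfl
  | succ m ih =>
    rcases hu with h | ⟨h1, b, hb, hadj⟩
    · obtain ⟨p, hp⟩ := ih h
      exact ⟨p, fun x hx => burnt_mono G s S (Nat.le_succ m) (hp x hx)⟩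
    · obtain ⟨p, hp⟩ := ih hb
      refine ⟨p.concat hadj.symm, ?_⟩
      intro x hx
      rw [Walk.support_concat, List.mem_append] at hx
      rcases hx with hx | hx
      · exact burnt_mono G s S (Nat.le_succ m) (hp x hx)
      · simp at hx; subst hx; exact Or.inr ⟨h1, b, hb, hadj⟩

lemma chord_shortcut {G : SimpleGraph V} {a b : V} (p : G.Walk a b) {x y : V}
    (hx : x ∈ p.support) (hy : y ∈ p.support) (hxy : G.Adj x y) :
    p.toSubgraph.Adj x y ∨
      ∃ q : G.Walk a b, q.length < p.length ∧ ∀ z ∈ q.support, z ∈ p.support := by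
  classical
  induction p with
  | nil =>
    simp only [Walk.support_nil, List.mem_singleton] at hx hy
    exact absurd (hx ▸ hy ▸ hxy) (G.irrefl)
  | @cons a c b h q ih =>
    have key : ∀ x y : V, x = a → y ∈ q.support → G.Adj x y →
        (Walk.cons h q).toSubgraph.Adj x y ∨
          ∃ r : G.Walk a b, r.length < (Walk.cons h q).length ∧
            ∀ z ∈ r.support, z ∈ (Walk.cons h q).support := by
      rintro x y rfl hyq hxy
      by_cases hyc : y = c
      · subst hyc
        left
        simp [Walk.toSubgraph, h]
      · right
        refine ⟨Walk.cons hxy (q.dropUntil y hyq), ?_, ?_⟩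
        · have hspec := q.take_spec hyq
          have hlen : (q.takeUntil y hyq).length + (q.dropUntil y hyq).length = q.length := by
            conv_rhs => rw [← hspec]
            rw [Walk.length_append]
          have htu : (q.takeUntil y hyq).length ≠ 0 := by
            intro h0
            exact hyc (Walk.eq_of_length_eq_zero h0).symm
          simp only [Walk.length_cons]
          omega
        · intro z hz
          simp only [Walk.support_cons, List.mem_cons] at hz ⊢
          rcases hz with rfl | hz
          · exact Or.inl rfl
          · exact Or.inr (q.support_dropUntil_subset hyq hz)
    simp only [Walk.support_cons, List.mem_cons] at hx hy
    rcases hx with rfl | hx <;> rcases hy with rfl | hy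
    · exact absurd rfl hxy.ne
    · exact key x y rfl hy hxy
    · rcases key y x rfl hx hxy.symm with h' | h'
      · exact Or.inl h'.symm
      · exact Or.inr h'
    · rcases ih hx hy with h' | ⟨r, hr1, hr2⟩
      · left
        simp only [Walk.toSubgraph, Subgraph.sup_adj]
        exact Or.inr h'
      · right
        exact ⟨Walk.cons h r, by simp [hr1], fun z hz => by
          simp only [Walk.support_cons, List.mem_cons] at hz ⊢
          rcases hz with rfl | hz
          · exact Or.inl rfl
          · exact Or.inr (hr2 z hz)⟩

end Aux

/-- If `l` is the length of a longest induced path in `G` starting at `s`, then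
every optimal strategy for the firefighting process on `(G, s)` defends at most `l` vertices. -/
theorem optimal_strategy_length_le {V : Type*} [Fintype V] (G : SimpleGraph V) (s : V) (l : ℕ)
    (hub : ∀ (u : V) (p : G.Walk s u), IsInducedPath G p → p.length ≤ l)
    (hmax : ∃ (u : V) (p : G.Walk s u), IsInducedPath G p ∧ p.length = l)
    (S : List V) (hS : OptimalStrategy G s S) :
    S.length ≤ l := by
  classical
  obtain ⟨⟨hvalid, hmin⟩, -⟩ := hS
  rcases Nat.eq_zero_or_pos S.length with h0 | hpos
  · exact h0 ▸ Nat.zero_le l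
  have hne : S ≠ [] := List.length_pos_iff.mp hpos
  set t := S.length with ht
  set v := S.getLast hne with hv
  have hvS : v ∈ S := List.getLast_mem hne
  have hsplit : S.dropLast ++ [v] = S := List.dropLast_append_getLast hne
  have hvdl : v ∉ S.dropLast := by
    intro hc
    have hnd := hvalid.1
    rw [← hsplit] at hnd
    exact (List.nodup_append'.mp hnd).2.2 hc (by simp)
  have hdl : S.dropLast = S.take (t-1) := S.dropLast_eq_take
  have htake : ∀ n ≤ t - 1, S.dropLast.take n = S.take n := by
    intro n hn
    rw [hdl, List.take_take, min_eq_left hn]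
  -- the prefix obtained by dropping the last defended vertex is a valid strategy
  have hvalid' : ValidStrategy G s S.dropLast := by
    refine ⟨(List.dropLast_sublist S).nodup hvalid.1, ?_⟩
    intro i hi
    have hi' : i < t - 1 := by simpa [List.length_dropLast] using hi
    have hgeteq : S.dropLast.get ⟨i, hi⟩ = S.get ⟨i, by omega⟩ := by
      simp [List.get_eq_getElem, List.getElem_dropLast]
    have hbe : burnt G s S.dropLast i = burnt G s S i :=
      burnt_eq_of_take_eq G s (fun n hn => htake n (by omega))
    rw [hgeteq, hbe]
    exact hvalid.2 i (by omega)
  have hlt : sav G s S.dropLast < sav G s S := by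
    refine hmin _ (List.dropLast_sublist S) ?_ hvalid'
    intro hc
    have := congrArg List.length hc
    rw [List.length_dropLast] at this
    omega
  have hsub : BurntSet G s S ⊆ BurntSet G s S.dropLast := by
    intro x hx
    rw [BurntSet, Set.mem_iUnion] at hx ⊢
    obtain ⟨i, hi⟩ := hx
    refine ⟨i, burnt_antitone G s ?_ i hi⟩
    intro n x hx
    rw [hdl, List.take_take] at hx
    have heq : S.take (min n (t-1)) = (S.take n).take (t-1) := by
      rw [List.take_take, Nat.min_comm]
    exact List.take_subset _ _ (heq ▸ hx)
  have hBne : BurntSet G s S ≠ BurntSet G s S.dropLast := by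
    intro hc
    rw [sav, sav, hc] at hlt
    exact lt_irrefl _ hlt
  obtain ⟨w, hw1, hw2⟩ := Set.exists_of_ssubset (hsub.ssubset_of_ne hBne)
  obtain ⟨m, hwm⟩ := Set.mem_iUnion.mp hw1
  -- find the first time the fire without the last defender exceeds the fire with it
  have hP : ∃ j, ∃ u, u ∈ burnt G s S.dropLast j ∧ u ∉ burnt G s S j :=
    ⟨m, w, hwm, fun hc => hw2 (Set.mem_iUnion.mpr ⟨m, hc⟩)⟩
  have hj0 : Nat.find hP ≠ 0 := by
    intro h0
    obtain ⟨u, hu1, hu2⟩ := Nat.find_spec hP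
    rw [h0] at hu1 hu2
    exact hu2 hu1
  obtain ⟨k, hk⟩ := Nat.exists_eq_succ_of_ne_zero hj0
  have hknot : ∀ u, u ∈ burnt G s S.dropLast k → u ∈ burnt G s S k := by
    intro u hu
    by_contra hc
    exact Nat.find_min hP (by omega) ⟨u, hu, hc⟩
  obtain ⟨u, hu1, hu2⟩ := Nat.find_spec hP
  rw [hk] at hu1 hu2
  have hunew : u ∉ burnt G s S.dropLast k :=
    fun hc => hu2 (burnt_mono G s S (Nat.le_succ k) (hknot u hc))
  rcases hu1 with hc | ⟨ht1, b, hb, hadj⟩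
  · exact absurd hc hunew
  have hbS : b ∈ burnt G s S k := hknot b hb
  have hutake : u ∈ S.take (k+1) := by
    by_contra hc
    exact hu2 (Or.inr ⟨hc, b, hbS, hadj⟩)
  have huv : u = v := by
    rcases le_or_gt (k+1) (t-1) with hkle | hkgt
    · rw [htake (k+1) hkle] at ht1
      exact absurd hutake ht1
    · have hta : S.dropLast.take (k+1) = S.dropLast :=
        List.take_of_length_le (by rw [List.length_dropLast]; omega)
      rw [hta] at ht1
      have huS : u ∈ S := List.take_subset _ _ hutake
      rw [← hsplit] at huS
      rcases List.mem_append.mp huS with h' | h'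
      · exact absurd h' ht1
      · simpa using h'
  subst huv
  -- so the last defended vertex v has a burnt neighbor b
  have hbB : b ∈ BurntSet G s S := Set.mem_iUnion.mpr ⟨k, hbS⟩
  have hvnb : v ∉ BurntSet G s S := by
    intro hc
    obtain ⟨m', hm'⟩ := Set.mem_iUnion.mp hc
    exact defended_not_burnt hvalid hvS m' hm'
  have hsB : s ∈ BurntSet G s S := Set.mem_iUnion.mpr ⟨0, rfl⟩
  have hvs : v ≠ s := fun hc => hvnb (hc ▸ hsB)
  -- consider walks from s to v whose support lies in the burnt set (plus v)
  have hQex : ∃ n, ∃ p : G.Walk s v,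
      p.length = n ∧ ∀ x ∈ p.support, x ∈ BurntSet G s S ∨ x = v := by
    obtain ⟨m', hbm⟩ := Set.mem_iUnion.mp hbB
    obtain ⟨q, hq⟩ := exists_walk_of_burnt hbm
    refine ⟨_, q.concat hadj.symm, rfl, ?_⟩
    intro x hx
    rw [Walk.support_concat, List.mem_append] at hx
    rcases hx with hx | hx
    · exact Or.inl (Set.mem_iUnion.mpr ⟨m', hq x hx⟩)
    · simp at hx
      exact Or.inr hx
  obtain ⟨p1, hp1len, hp1Q⟩ := Nat.find_spec hQex
  set p := p1.bypass with hp
  have hpQ : ∀ x ∈ p.support, x ∈ BurntSet G s S ∨ x = v :=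
    fun x hx => hp1Q x (p1.support_bypass_subset hx)
  have hplen : p.length = Nat.find hQex :=
    le_antisymm (hp1len ▸ p1.length_bypass_le) (Nat.find_min' hQex ⟨p, rfl, hpQ⟩)
  have hppath : p.IsPath := p1.bypass_isPath
  -- a minimum-length such walk is an induced path
  have hinduced : IsInducedPath G p := by
    refine ⟨hppath, ?_⟩
    intro x hx y hy hadj'
    rcases chord_shortcut p hx hy hadj' with h' | ⟨q, hq1, hq2⟩
    · exact h'
    · exfalso
      have : Nat.find hQex ≤ q.length :=
        Nat.find_min' hQex ⟨q, rfl, fun z hz => hpQ z (hq2 z hz)⟩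
      omega
  have hl : p.length ≤ l := hub v p hinduced
  -- the length of this induced path is at least the number of defended vertices
  obtain ⟨w', hvw, q, hq⟩ := Walk.exists_eq_cons_of_ne hvs p.reverse
  have hpeq : p = (Walk.cons hvw q).reverse := by rw [← hq, Walk.reverse_reverse]
  have hlen2 : p.length = q.length + 1 := by
    rw [hpeq]
    simp
  have hsupp : p.support = (v :: q.support).reverse := by
    rw [hpeq, Walk.support_reverse, Walk.support_cons]
  have hnodup2 : (v :: q.support).Nodup := by
    have hnd := hppath.support_nodup
    rw [hsupp] at hnd
    exact List.nodup_reverse.mp hnd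
  have hvq : v ∉ q.support := (List.nodup_cons.mp hnodup2).1
  have hqin : ∀ x ∈ q.support, x ∈ BurntSet G s S := by
    intro x hx
    have hxp : x ∈ p.support := by
      rw [hsupp]
      simp [hx]
    rcases hpQ x hxp with h' | rfl
    · exact h'
    · exact absurd hx hvq
  have hqnS : ∀ x ∈ q.reverse.support, x ∉ S := by
    intro x hx hxS
    rw [Walk.support_reverse, List.mem_reverse] at hx
    obtain ⟨m', hm'⟩ := Set.mem_iUnion.mp (hqin x hx)
    exact defended_not_burnt hvalid hxS m' hm'
  have hwb : w' ∈ burnt G s S q.length := by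
    have := burnt_of_walk (a := s) (u := w') (m := 0) rfl q.reverse hqnS
    simpa using this
  have hfinal : t ≤ q.length + 1 := by
    by_contra hc
    push_neg at hc
    have hle : q.length + 1 ≤ t - 1 := by omega
    have hvtake : v ∉ S.take (q.length + 1) := by
      intro hmem
      apply hvdl
      have heq : S.take (q.length+1) = (S.take (t-1)).take (q.length+1) := by
        rw [List.take_take, min_eq_left hle]
      rw [hdl]
      exact List.take_subset _ _ (heq ▸ hmem)
    have hvburn : v ∈ burnt G s S (q.length + 1) := Or.inr ⟨hvtake, w', hwb, hvw⟩
    have hvburn' : v ∈ burnt G s S (t-1) := burnt_mono G s S hle hvburn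
    have hget : S.get ⟨t-1, by omega⟩ = v := by
      simp [hv, ht, List.getLast_eq_getElem, List.get_eq_getElem]
    exact (hget ▸ hvalid.2 (t-1) (by omega)) hvburn'
  omega
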